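/- Let u be a C² convex function on a bounded convex domain Ω ⊂ ℝ^n with min_Ω u = 0 attained at an interior point, u = 1 on ∂Ω, and suppose γ^{-1}B_R(x₀) ⊂ Ω ⊂ γB_R(x₀). Then ∫_{B_{R/(2γ)}(x₀)} det(D²u) dx ≤ 2^n ω_n γ^n R^{-n}. -/

import Mathlib

open MeasureTheory Filter Bornology Metric Set
open scoped RealInnerProductSpace ENNReal

noncomputable section

/-- Hessian matrix of `u` at `x`. -/
def hess {n : ℕ} (u : EuclideanSpace ℝ (Fin n) → ℝ) (x : EuclideanSpace ℝ (Fin n)) :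
    Matrix (Fin n) (Fin n) ℝ :=
  fun i j => iteratedFDeriv ℝ 2 u x ![EuclideanSpace.single i 1, EuclideanSpace.single j 1]

/-- `k`-th elementary symmetric function of the eigenvalues of a matrix,
computed as the sum of its principal `k × k` minors. -/
def Smat {n : ℕ} (k : ℕ) (M : Matrix (Fin n) (Fin n) ℝ) : ℝ :=
  ∑ s ∈ Finset.univ.powersetCard k, (M.submatrix (Subtype.val : s → Fin n) Subtype.val).det

namespace HessAux

variable {n : ℕ}

local notation "E" => EuclideanSpace ℝ (Fin n)

/-- The inverse of the duality isometry, as a continuous linear map. -/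
def L : StrongDual ℝ E →L[ℝ] E :=
{ toFun := fun φ => (InnerProductSpace.toDual ℝ E).symm φ,
  map_add' := fun φ ψ => map_add _ _ _,
  map_smul' := fun c φ => by
    simp [LinearIsometryEquiv.map_smulₛₗ, starRingEnd_apply, star_trivial]
  cont := (InnerProductSpace.toDual ℝ E).symm.continuous }

theorem inner_L (φ : StrongDual ℝ E) (w : E) : ⟪L φ, w⟫ = φ w :=
  InnerProductSpace.toDual_symm_apply

/-- Second derivative as a bilinear-map-valued function. -/
def B2 (u : E → ℝ) (x : E) : E →L[ℝ] E →L[ℝ] ℝ := fderiv ℝ (fderiv ℝ u) x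

/-- The gradient map. -/
def gr (u : E → ℝ) (y : E) : E := L (fderiv ℝ u y)

/-- Derivative of the gradient map. -/
def A (u : E → ℝ) (x : E) : E →L[ℝ] E := L.comp (B2 u x)

theorem hdu {u : E → ℝ} (hu : ContDiff ℝ 2 u) : Differentiable ℝ u :=
  hu.differentiable (by norm_num)

theorem hd1 {u : E → ℝ} (hu : ContDiff ℝ 2 u) : ContDiff ℝ 1 (fderiv ℝ u) :=
  hu.fderiv_right (by norm_num)

theorem hB2 {u : E → ℝ} (hu : ContDiff ℝ 2 u) (x : E) :
    HasFDerivAt (fderiv ℝ u) (B2 u x) x :=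
  ((hd1 hu).differentiable (by norm_num) x).hasFDerivAt

theorem hgr {u : E → ℝ} (hu : ContDiff ℝ 2 u) (x : E) : HasFDerivAt (gr u) (A u x) x :=
  L.hasFDerivAt.comp x (hB2 hu x)

theorem inner_gr (u : E → ℝ) (y w : E) : ⟪gr u y, w⟫ = fderiv ℝ u y w := inner_L _ _

theorem inner_A (u : E → ℝ) (x v w : E) : ⟪A u x v, w⟫ = B2 u x v w := inner_L _ _

theorem hess_apply (u : E → ℝ) (x : E) (i j : Fin n) :
    hess u x i j = B2 u x (EuclideanSpace.single i 1) (EuclideanSpace.single j 1) := by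
  simp [hess, iteratedFDeriv_two_apply, B2]

theorem B2_symm {u : E → ℝ} (hu : ContDiff ℝ 2 u) (x v w : E) :
    B2 u x v w = B2 u x w v :=
  second_derivative_symmetric (fun y => ((hdu hu) y).hasFDerivAt) (hB2 hu x) v w

theorem det_A_eq {u : E → ℝ} (hu : ContDiff ℝ 2 u) (x : E) :
    (A u x).det = (hess u x).det := by
  have hb : LinearMap.toMatrix (EuclideanSpace.basisFun (Fin n) ℝ).toBasis
      (EuclideanSpace.basisFun (Fin n) ℝ).toBasis ((A u x : E →L[ℝ] E) : E →ₗ[ℝ] E)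
      = (hess u x).transpose := by
    ext i j
    rw [LinearMap.toMatrix_apply]
    simp only [OrthonormalBasis.coe_toBasis, EuclideanSpace.basisFun_apply,
      OrthonormalBasis.coe_toBasis_repr_apply, EuclideanSpace.basisFun_repr,
      Matrix.transpose_apply, ContinuousLinearMap.coe_coe]
    have h1 : (A u x (EuclideanSpace.single j 1)) i
        = ⟪A u x (EuclideanSpace.single j 1), EuclideanSpace.single i 1⟫ := by
      rw [real_inner_comm, EuclideanSpace.inner_single_left]; simp
    rw [h1, inner_A, hess_apply]
  have : (hess u x).transpose.det = (A u x).det := by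
    rw [← hb, LinearMap.det_toMatrix]
  rw [← Matrix.det_transpose (hess u x), this]

theorem hasDerivAt_lineaux (x v : E) (t : ℝ) :
    HasDerivAt (fun t : ℝ => x + t • v) v t := by
  simpa using ((hasDerivAt_id t).smul_const v).const_add x

theorem hasDerivAt_line {u : E → ℝ} (hu : ContDiff ℝ 2 u) (x v : E) (t : ℝ) :
    HasDerivAt (fun t : ℝ => u (x + t • v)) (fderiv ℝ u (x + t • v) v) t :=
  ((hdu hu (x + t • v)).hasFDerivAt).comp_hasDerivAt t (hasDerivAt_lineaux x v t)

theorem hasDerivAt_line2 {u : E → ℝ} (hu : ContDiff ℝ 2 u) (x v : E) (t : ℝ) :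
    HasDerivAt (fun t : ℝ => fderiv ℝ u (x + t • v) v) (B2 u (x + t • v) v v) t := by
  have hc : HasDerivAt (fun t : ℝ => fderiv ℝ u (x + t • v)) (B2 u (x + t • v) v) t :=
    (hB2 hu (x + t • v)).comp_hasDerivAt t (hasDerivAt_lineaux x v t)
  simpa using hc.clm_apply (hasDerivAt_const t v)

theorem convexOn_line {Ω : Set E} {u : E → ℝ} (hconv : ConvexOn ℝ (closure Ω) u)
    (x v : E) :
    ConvexOn ℝ {t : ℝ | x + t • v ∈ closure Ω} (fun t => u (x + t • v)) := by
  have h := hconv.comp_affineMap (AffineMap.lineMap x (x + v) : ℝ →ᵃ[ℝ] E)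
  have hmap : ∀ t : ℝ, (AffineMap.lineMap x (x + v) : ℝ →ᵃ[ℝ] E) t = x + t • v := by
    intro t
    simp [AffineMap.lineMap_apply, add_comm]
  have hset : (⇑(AffineMap.lineMap x (x + v) : ℝ →ᵃ[ℝ] E)) ⁻¹' (closure Ω)
      = {t : ℝ | x + t • v ∈ closure Ω} := by
    ext t; simp [hmap t]
  have hfun : (u ∘ ⇑(AffineMap.lineMap x (x + v) : ℝ →ᵃ[ℝ] E))
      = fun t => u (x + t • v) := by
    funext t; simp [hmap t]
  rwa [hset, hfun] at h

theorem monotoneOn_line {Ω : Set E} {u : E → ℝ} (hu : ContDiff ℝ 2 u)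
    (hconv : ConvexOn ℝ (closure Ω) u) (x v : E) :
    MonotoneOn (fun t : ℝ => fderiv ℝ u (x + t • v) v)
      {t : ℝ | x + t • v ∈ closure Ω} := by
  have h := (convexOn_line hconv x v).monotoneOn_deriv
    (fun t _ => (hasDerivAt_line hu x v t).differentiableAt)
  intro a ha b hb hab
  have := h ha hb hab
  rwa [(hasDerivAt_line hu x v a).deriv, (hasDerivAt_line hu x v b).deriv] at this

theorem quad_nonneg {Ω : Set E} {u : E → ℝ} (hu : ContDiff ℝ 2 u) (hΩo : IsOpen Ω)
    (hconv : ConvexOn ℝ (closure Ω) u) {x : E} (hx : x ∈ Ω) (v : E) :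
    0 ≤ B2 u x v v := by
  set φ : ℝ → ℝ := fun t => fderiv ℝ u (x + t • v) v with hφ
  have hmono := monotoneOn_line hu hconv x v
  have hJ : IsOpen {t : ℝ | x + t • v ∈ Ω} :=
    hΩo.preimage (by continuity)
  have h0J : (0 : ℝ) ∈ {t : ℝ | x + t • v ∈ Ω} := by simp [hx]
  have hderiv : HasDerivAt φ (B2 u x v v) 0 := by
    simpa using hasDerivAt_line2 hu x v 0
  have htend : Tendsto (slope φ 0) (nhdsWithin 0 (Set.Ioi 0)) (nhds (B2 u x v v)) :=
    (hasDerivAt_iff_tendsto_slope.1 hderiv).mono_left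
      (nhdsWithin_mono 0 (fun t ht => ne_of_gt ht))
  have hev : ∀ᶠ t in nhdsWithin (0 : ℝ) (Set.Ioi 0), 0 ≤ slope φ 0 t := by
    filter_upwards [self_mem_nhdsWithin,
      mem_nhdsWithin_of_mem_nhds (hJ.mem_nhds h0J)] with t ht htJ
    have ht' : (0 : ℝ) < t := ht
    have h0S : (0 : ℝ) ∈ {s : ℝ | x + s • v ∈ closure Ω} := by
      simpa using subset_closure hx
    have htS : t ∈ {s : ℝ | x + s • v ∈ closure Ω} := subset_closure htJ
    have := hmono h0S htS ht'.le
    rw [slope_def_field]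
    have : φ 0 ≤ φ t := this
    simp only [sub_zero]
    exact div_nonneg (by linarith) ht'.le
  exact ge_of_tendsto htend hev

theorem quad_sum (u : E → ℝ) (x : E) (v : Fin n → ℝ) :
    B2 u x (∑ i, v i • EuclideanSpace.single i 1) (∑ i, v i • EuclideanSpace.single i 1)
      = dotProduct v ((hess u x).mulVec v) := by
  simp only [map_sum, ContinuousLinearMap.map_smul, ContinuousLinearMap.coe_sum',
    ContinuousLinearMap.coe_smul', Finset.sum_apply, Pi.smul_apply, smul_eq_mul,
    dotProduct, Matrix.mulVec, hess_apply]
  simp only [Finset.mul_sum]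
  rw [Finset.sum_comm]
  refine Finset.sum_congr rfl fun i _ => ?_
  refine Finset.sum_congr rfl fun j _ => ?_
  ring

theorem psd {Ω : Set E} {u : E → ℝ} (hu : ContDiff ℝ 2 u) (hΩo : IsOpen Ω)
    (hconv : ConvexOn ℝ (closure Ω) u) {x : E} (hx : x ∈ Ω) :
    (hess u x).PosSemidef := by
  rw [Matrix.posSemidef_iff_dotProduct_mulVec]
  constructor
  · ext i j
    simp only [Matrix.conjTranspose_apply, star_trivial, hess_apply]
    exact B2_symm hu x _ _
  · intro v
    have h := quad_nonneg hu hΩo hconv hx (∑ i, v i • EuclideanSpace.single i 1)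
    rw [quad_sum u x v] at h
    simpa [star_trivial] using h

theorem det_hess_nonneg {Ω : Set E} {u : E → ℝ} (hu : ContDiff ℝ 2 u) (hΩo : IsOpen Ω)
    (hconv : ConvexOn ℝ (closure Ω) u) {x : E} (hx : x ∈ Ω) :
    0 ≤ (hess u x).det := by
  have h := psd hu hΩo hconv hx
  rw [h.1.det_eq_prod_eigenvalues]
  exact Finset.prod_nonneg fun i _ => h.eigenvalues_nonneg i

theorem kernel {Ω : Set E} {u : E → ℝ} (hu : ContDiff ℝ 2 u) (hΩo : IsOpen Ω)
    (hconv : ConvexOn ℝ (closure Ω) u) {x : E} (hx : x ∈ Ω) {v : E}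
    (hq : B2 u x v v = 0) : A u x v = 0 := by
  have key : ∀ w : E, B2 u x v w = 0 := by
    intro w
    set a := B2 u x w w with ha'
    set b := B2 u x v w with hb'
    have ha : 0 ≤ a := quad_nonneg hu hΩo hconv hx w
    have expand : ∀ t : ℝ, 0 ≤ t * (2 * b) + t ^ 2 * a := by
      intro t
      have h0 := quad_nonneg hu hΩo hconv hx (v + t • w)
      have hcalc : B2 u x (v + t • w) (v + t • w)
          = B2 u x v v + t * B2 u x v w + t * B2 u x w v + t ^ 2 * B2 u x w w := by
        simp only [map_add, ContinuousLinearMap.map_smul, ContinuousLinearMap.add_apply,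
          ContinuousLinearMap.coe_smul', Pi.smul_apply, smul_eq_mul]
        ring
      rw [hcalc, hq, B2_symm hu x w v] at h0
      rw [ha', hb']
      linarith
    have hpos : 0 < a + 1 := by linarith
    have h1 := expand (-b / (a + 1))
    have h2 : (-b / (a + 1)) * (2 * b) + (-b / (a + 1)) ^ 2 * a
        = (b ^ 2 * (-(a + 2))) / (a + 1) ^ 2 := by
      field_simp
      ring
    rw [h2] at h1
    have h3 : b ^ 2 * (-(a + 2)) ≤ 0 := by nlinarith [sq_nonneg b]
    have h4 : 0 < ((a + 1) : ℝ) ^ 2 := by positivity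
    have h5 : 0 ≤ b ^ 2 * (-(a + 2)) := by
      have h7 := mul_nonneg h1 h4.le
      rwa [div_mul_cancel₀ _ (ne_of_gt h4)] at h7
    have h6 : b ^ 2 = 0 := by nlinarith [sq_nonneg b]
    have := pow_eq_zero_iff (n := 2) (by norm_num) |>.1 h6
    simpa [hb'] using this
  have hinner : ⟪A u x v, A u x v⟫ = 0 := by
    rw [inner_A]; exact key _
  exact inner_self_eq_zero.mp hinner

theorem injOn {Ω : Set E} {u : E → ℝ} (hu : ContDiff ℝ 2 u) (hΩo : IsOpen Ω)
    (hΩc : Convex ℝ Ω) (hconv : ConvexOn ℝ (closure Ω) u) {B : Set E} (hB : B ⊆ Ω)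
    (hdet : ∀ x ∈ B, (hess u x).det ≠ 0) : Set.InjOn (gr u) B := by
  intro x hx y hy hxy
  by_contra hne
  set v : E := y - x with hv
  have hvne : v ≠ 0 := sub_ne_zero.2 fun h => hne h.symm
  have hseg : ∀ t ∈ Icc (0:ℝ) 1, x + t • v ∈ Ω := fun t ht =>
    hΩc.add_smul_sub_mem (hB hx) (hB hy) ht
  have hsub : ∀ t ∈ Icc (0:ℝ) 1, t ∈ {s : ℝ | x + s • v ∈ closure Ω} := fun t ht =>
    subset_closure (hseg t ht)
  set φ : ℝ → ℝ := fun t => fderiv ℝ u (x + t • v) v with hφ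
  have e0 : x + (0:ℝ) • v = x := by simp
  have e1 : x + (1:ℝ) • v = y := by simp [hv]
  have hφ01 : φ 0 = φ 1 := by
    have i0 : φ 0 = ⟪gr u x, v⟫ := by rw [hφ]; simp only [e0]; exact (inner_gr u x v).symm
    have i1 : φ 1 = ⟪gr u y, v⟫ := by rw [hφ]; simp only [e1]; exact (inner_gr u y v).symm
    rw [i0, i1, hxy]
  have hmono := monotoneOn_line hu hconv x v
  have hconst : ∀ t ∈ Icc (0:ℝ) 1, φ t = φ 0 := by
    intro t ht
    have h1 := hmono (hsub 0 ⟨le_refl 0, zero_le_one⟩) (hsub t ht) ht.1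
    have h2 := hmono (hsub t ht) (hsub 1 ⟨zero_le_one, le_refl 1⟩) ht.2
    exact le_antisymm (le_trans h2 (le_of_eq hφ01.symm)) h1
  have hderiv : HasDerivAt φ (B2 u x v v) 0 := by
    simpa using hasDerivAt_line2 hu x v 0
  have htend : Tendsto (slope φ 0) (nhdsWithin 0 (Set.Ioi 0)) (nhds (B2 u x v v)) :=
    (hasDerivAt_iff_tendsto_slope.1 hderiv).mono_left
      (nhdsWithin_mono 0 (fun t ht => ne_of_gt ht))
  have hzero : Tendsto (slope φ 0) (nhdsWithin 0 (Set.Ioi 0)) (nhds 0) := by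
    have hev : ∀ᶠ t in nhdsWithin (0:ℝ) (Set.Ioi 0), (0:ℝ) = slope φ 0 t := by
      filter_upwards [Ioo_mem_nhdsGT_of_mem (by exact ⟨le_refl 0, zero_lt_one⟩ :
        (0:ℝ) ∈ Set.Ico 0 1)] with t ht
      rw [slope_def_field, hconst t ⟨ht.1.le, ht.2.le⟩, sub_self, zero_div]
    exact tendsto_const_nhds.congr' hev
  have h0 : B2 u x v v = 0 := tendsto_nhds_unique htend hzero
  have hker : A u x v = 0 := kernel hu hΩo hconv (hB hx) h0
  have hvsum : (∑ j, v j • EuclideanSpace.single j (1:ℝ)) = v := by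
    simpa [EuclideanSpace.basisFun_apply, EuclideanSpace.basisFun_repr] using
      (EuclideanSpace.basisFun (Fin n) ℝ).sum_repr v
  have hmv : (hess u x).mulVec (fun j => v j) = 0 := by
    funext i
    have hcoord : ((hess u x).mulVec (fun j => v j)) i = B2 u x v (EuclideanSpace.single i 1) := by
      have : B2 u x v (EuclideanSpace.single i 1)
          = ∑ j, v j * B2 u x (EuclideanSpace.single j 1) (EuclideanSpace.single i 1) := by
        conv_lhs => rw [← hvsum]
        simp [map_sum, ContinuousLinearMap.map_smul, ContinuousLinearMap.coe_sum',
          Finset.sum_apply]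
      rw [this]
      simp only [Matrix.mulVec, dotProduct, hess_apply]
      refine Finset.sum_congr rfl fun j _ => ?_
      beta_reduce
      rw [B2_symm hu x (EuclideanSpace.single i 1) (EuclideanSpace.single j 1)]
      ring
    rw [hcoord]
    have : B2 u x v (EuclideanSpace.single i 1) = ⟪A u x v, EuclideanSpace.single i 1⟫ :=
      (inner_A u x v _).symm
    rw [this, hker, inner_zero_left]
    rfl
  have hv0 : (fun j => v j) = 0 := Matrix.eq_zero_of_mulVec_eq_zero (hdet x hx) hmv
  exact hvne (by ext j; simpa using congrFun hv0 j)

theorem u_le_one (hn : 0 < n) {Ω : Set E} {u : E → ℝ} (hΩo : IsOpen Ω)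
    (hΩb : IsBounded Ω) (hconv : ConvexOn ℝ (closure Ω) u)
    (hbd : ∀ x ∈ frontier Ω, u x = 1) {y : E} (hy : y ∈ Ω) : u y ≤ 1 := by
  classical
  set d : E := EuclideanSpace.single (⟨0, hn⟩ : Fin n) (1:ℝ) with hd
  have hdnorm : ‖d‖ = 1 := by rw [hd, EuclideanSpace.norm_single]; norm_num
  set I : Set ℝ := {t : ℝ | y + t • d ∈ closure Ω} with hI
  have hIc : IsClosed I := isClosed_closure.preimage (by continuity)
  have h0I : (0:ℝ) ∈ I := by
    have : y + (0:ℝ) • d = y := by simp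
    simp only [hI, Set.mem_setOf_eq, this]
    exact subset_closure hy
  obtain ⟨M, hM⟩ : ∃ M, closure Ω ⊆ closedBall y M := hΩb.closure.subset_closedBall y
  have hIbdd : ∀ t ∈ I, |t| ≤ M := by
    intro t ht
    have h1 := hM ht
    have : dist (y + t • d) y = |t| := by
      rw [dist_eq_norm]
      simp [norm_smul, hdnorm]
    rw [mem_closedBall, this] at h1
    exact h1
  have hbddA : BddAbove I := ⟨M, fun t ht => (le_abs_self t).trans (hIbdd t ht)⟩
  have hbddB : BddBelow I := ⟨-M, fun t ht => neg_le_of_abs_le (hIbdd t ht)⟩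
  set b := sSup I with hb
  set a := sInf I with ha
  have hbI : b ∈ I := hIc.csSup_mem ⟨0, h0I⟩ hbddA
  have haI : a ∈ I := hIc.csInf_mem ⟨0, h0I⟩ hbddB
  have h0b : (0:ℝ) ≤ b := le_csSup hbddA h0I
  have ha0 : a ≤ 0 := csInf_le hbddB h0I
  have hnotb : y + b • d ∉ Ω := by
    intro hmem
    obtain ⟨ε, hε, hball⟩ := Metric.isOpen_iff.1 hΩo _ hmem
    have hmem2 : y + (b + ε/2) • d ∈ Metric.ball (y + b • d) ε := by
      rw [mem_ball, dist_eq_norm]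
      have : y + (b + ε/2) • d - (y + b • d) = (ε/2) • d := by module
      rw [this, norm_smul, hdnorm, mul_one, Real.norm_eq_abs, abs_of_pos (half_pos hε)]
      linarith
    have : b + ε/2 ∈ I := subset_closure (hball hmem2)
    have := le_csSup hbddA this
    linarith
  have hnota : y + a • d ∉ Ω := by
    intro hmem
    obtain ⟨ε, hε, hball⟩ := Metric.isOpen_iff.1 hΩo _ hmem
    have hmem2 : y + (a - ε/2) • d ∈ Metric.ball (y + a • d) ε := by
      rw [mem_ball, dist_eq_norm]
      have : y + (a - ε/2) • d - (y + a • d) = (-(ε/2)) • d := by module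
      rw [this, norm_smul, hdnorm, mul_one, Real.norm_eq_abs, abs_neg,
        abs_of_pos (half_pos hε)]
      linarith
    have : a - ε/2 ∈ I := subset_closure (hball hmem2)
    have := csInf_le hbddB this
    linarith
  have hfrontb : y + b • d ∈ frontier Ω := by
    rw [hΩo.frontier_eq]
    exact ⟨hbI, hnotb⟩
  have hfronta : y + a • d ∈ frontier Ω := by
    rw [hΩo.frontier_eq]
    exact ⟨haI, hnota⟩
  have hub : u (y + b • d) = 1 := hbd _ hfrontb
  have hua : u (y + a • d) = 1 := hbd _ hfronta
  rcases eq_or_lt_of_le (ha0.trans h0b) with hab | hab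
  · exfalso
    have ha'' : a = 0 := by linarith [hab.le, hab.ge]
    apply hnota
    rw [ha'']
    simpa using hy
  · set θ := (-a) / (b - a) with hθ
    have hba : 0 < b - a := sub_pos.2 hab
    have hθ0 : 0 ≤ θ := div_nonneg (neg_nonneg.2 ha0) hba.le
    have hθ1 : θ ≤ 1 := by
      rw [hθ, div_le_one hba]
      linarith
    have hcoeff : (1 - θ) * a + θ * b = 0 := by
      rw [hθ]
      field_simp
      ring
    have hcomb : (1 - θ) • (y + a • d) + θ • (y + b • d) = y := by
      have : (1 - θ) • (y + a • d) + θ • (y + b • d)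
          = y + ((1 - θ) * a + θ * b) • d := by module
      rw [this, hcoeff]
      simp
    have hseg : y ∈ segment ℝ (y + a • d) (y + b • d) :=
      ⟨1 - θ, θ, by linarith, hθ0, by ring, hcomb⟩
    have := hconv.le_on_segment (hfronta.1) (hfrontb.1) hseg
    · rw [hua, hub] at this
      simpa using this

theorem grad_bound (hn : 0 < n) {Ω : Set E} {u : E → ℝ} (hu : ContDiff ℝ 2 u)
    (hΩo : IsOpen Ω) (hΩb : IsBounded Ω) (hconv : ConvexOn ℝ (closure Ω) u)
    (hbd : ∀ x ∈ frontier Ω, u x = 1)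
    (hmin : ∃ z ∈ Ω, u z = 0 ∧ ∀ x ∈ Ω, u z ≤ u x)
    {x₀ : E} {γ R : ℝ} (hγ : 1 ≤ γ) (hR : 0 < R)
    (hball₁ : Metric.ball x₀ (γ⁻¹ * R) ⊆ Ω)
    {x : E} (hx : x ∈ Metric.ball x₀ (R / (2 * γ))) : ‖gr u x‖ ≤ 2 * γ / R := by
  have hγ0 : 0 < γ := lt_of_lt_of_le one_pos hγ
  set r := R / (2 * γ) with hr'
  have hr : 0 < r := by positivity
  have hrle : r + r = γ⁻¹ * R := by
    rw [hr']
    field_simp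
    ring
  have hxΩ : x ∈ Ω := by
    apply hball₁
    apply Metric.ball_subset_ball _ hx
    rw [← hrle]; linarith
  rcases eq_or_ne (gr u x) 0 with hw | hw
  · rw [hw, norm_zero]; positivity
  · set w := gr u x with hwdef
    set v : E := r • (‖w‖⁻¹ • w) with hv
    have hwn : 0 < ‖w‖ := norm_pos_iff.2 hw
    have hvnorm : ‖v‖ = r := by
      rw [hv, norm_smul, norm_smul, norm_inv, norm_norm]
      rw [inv_mul_cancel₀ hwn.ne', mul_one]
      simp [abs_of_pos hr]
    set y := x + v with hy'
    have hyball : y ∈ Metric.ball x₀ (γ⁻¹ * R) := by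
      rw [mem_ball]
      calc dist y x₀ ≤ dist y x + dist x x₀ := dist_triangle _ _ _
        _ < r + r := by
            apply add_lt_add_of_le_of_lt
            · rw [hy', dist_eq_norm, add_sub_cancel_left, hvnorm]
            · exact hx
        _ = γ⁻¹ * R := hrle
    have hyΩ : y ∈ Ω := hball₁ hyball
    have h0S : (0:ℝ) ∈ {t : ℝ | x + t • v ∈ closure Ω} := by
      have : x + (0:ℝ) • v = x := by simp
      simp only [Set.mem_setOf_eq, this]
      exact subset_closure hxΩ
    have h1S : (1:ℝ) ∈ {t : ℝ | x + t • v ∈ closure Ω} := by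
      have : x + (1:ℝ) • v = y := by rw [hy']; simp
      simp only [Set.mem_setOf_eq, this]
      exact subset_closure hyΩ
    have hda : HasDerivAt (fun t : ℝ => u (x + t • v)) (fderiv ℝ u x v) 0 := by
      simpa using hasDerivAt_line hu x v 0
    have hslope := (convexOn_line hconv x v).le_slope_of_hasDerivAt h0S h1S zero_lt_one hda
    have hslope_eq : slope (fun t : ℝ => u (x + t • v)) 0 1 = u y - u x := by
      rw [slope_def_field]
      norm_num
      rfl
    have hinner : fderiv ℝ u x v = r * ‖w‖ := by
      rw [← inner_gr u x v, hv, real_inner_smul_right, real_inner_smul_right,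
        real_inner_self_eq_norm_sq]
      rw [← hwdef]
      field_simp
    have hux : 0 ≤ u x := by
      obtain ⟨z, hz, hz0, hzmin⟩ := hmin
      have := hzmin x hxΩ
      linarith [this, hz0.le, hz0.ge]
    have huy : u y ≤ 1 := u_le_one hn hΩo hΩb hconv hbd hyΩ
    have hkey : r * ‖w‖ ≤ 1 := by
      rw [← hinner]
      calc fderiv ℝ u x v ≤ u y - u x := hslope.trans_eq hslope_eq
        _ ≤ 1 := by linarith
    rw [hr'] at hkey
    rw [div_mul_eq_mul_div, div_le_one (by positivity)] at hkey
    rw [le_div_iff₀ hR]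
    linarith [mul_comm ‖w‖ R]

end HessAux

theorem hessian_integral_upper_bound (n : ℕ) (hn : 0 < n)
    (Ω : Set (EuclideanSpace ℝ (Fin n))) (hΩo : IsOpen Ω) (hΩc : Convex ℝ Ω)
    (hΩb : IsBounded Ω)
    (u : EuclideanSpace ℝ (Fin n) → ℝ) (hu : ContDiff ℝ 2 u)
    (hconv : ConvexOn ℝ (closure Ω) u)
    (hmin : ∃ z ∈ Ω, u z = 0 ∧ ∀ x ∈ Ω, u z ≤ u x)
    (hbd : ∀ x ∈ frontier Ω, u x = 1)
    (γ R : ℝ) (x₀ : EuclideanSpace ℝ (Fin n)) (hγ : 1 ≤ γ) (hR : 0 < R)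
    (hball₁ : Metric.ball x₀ (γ⁻¹ * R) ⊆ Ω) (hball₂ : Ω ⊆ Metric.ball x₀ (γ * R)) :
    ∫ x in Metric.ball x₀ (R / (2 * γ)), (hess u x).det ≤
      2 ^ n * (volume (Metric.ball (0 : EuclideanSpace ℝ (Fin n)) 1)).toReal * γ ^ n *
        R ^ (-(n : ℝ)) := by
  classical
  have hγ0 : 0 < γ := lt_of_lt_of_le one_pos hγ
  set r := R / (2 * γ) with hr'
  have hr : 0 < r := by positivity
  set B := Metric.ball x₀ r with hBdef
  have hrle : r ≤ γ⁻¹ * R := by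
    rw [hr', inv_mul_eq_div]
    exact div_le_div_of_nonneg_left hR.le hγ0 (by linarith)
  have hBΩ : B ⊆ Ω := (Metric.ball_subset_ball hrle).trans hball₁
  -- continuity of the Hessian determinant
  have hB2cont : Continuous (HessAux.B2 u) :=
    (HessAux.hd1 hu).continuous_fderiv (by norm_num)
  have hdet_cont : Continuous fun x => (hess u x).det := by
    have hmat : Continuous fun x => hess u x := by
      apply continuous_pi; intro i; apply continuous_pi; intro j
      have : (fun x => hess u x i j)
          = fun x => HessAux.B2 u x (EuclideanSpace.single i 1) (EuclideanSpace.single j 1) := by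
        funext x; exact HessAux.hess_apply u x i j
      rw [this]
      exact ((ContinuousLinearMap.apply ℝ ℝ (EuclideanSpace.single j 1)).continuous.comp
        (((ContinuousLinearMap.apply ℝ (EuclideanSpace ℝ (Fin n) →L[ℝ] ℝ)
          (EuclideanSpace.single i 1))).continuous.comp hB2cont))
    exact hmat.matrix_det
  set t := {x : EuclideanSpace ℝ (Fin n) | (hess u x).det ≠ 0} with htdef
  have ht_open : IsOpen t := isOpen_compl_singleton.preimage hdet_cont
  set s := B ∩ t with hsdef
  have hs_open : IsOpen s := Metric.isOpen_ball.inter ht_open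
  have hs_meas : MeasurableSet s := hs_open.measurableSet
  have hsB : s ⊆ B := inter_subset_left
  have hsΩ : s ⊆ Ω := hsB.trans hBΩ
  -- integrability
  have hint : IntegrableOn (fun x => (hess u x).det) B volume :=
    ((hdet_cont.continuousOn).integrableOn_compact (isCompact_closedBall x₀ r)).mono_set
      Metric.ball_subset_closedBall
  -- reduce the integral to `s`
  have hsplit : ∫ x in B, (hess u x).det = ∫ x in s, (hess u x).det := by
    have h1 := MeasureTheory.integral_inter_add_diff (μ := volume)
      (f := fun x => (hess u x).det) (ht := ht_open.measurableSet) hint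
    have h2 : ∫ x in B \ t, (hess u x).det = 0 := by
      have heq : EqOn (fun x => (hess u x).det) (fun _ => (0:ℝ)) (B \ t) := by
        intro x hx
        exact not_not.1 hx.2
      rw [setIntegral_congr_fun (Metric.isOpen_ball.measurableSet.diff
        ht_open.measurableSet) heq]
      simp
    rw [← h1, h2, add_zero]
  have hnonneg : ∀ x ∈ s, 0 ≤ (hess u x).det := fun x hx =>
    HessAux.det_hess_nonneg hu hΩo hconv (hsΩ hx)
  have heq1 : ∫ x in s, (hess u x).det
      = (∫⁻ x in s, ENNReal.ofReal ((hess u x).det)).toReal :=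
    integral_eq_lintegral_of_nonneg_ae
      ((ae_restrict_iff' hs_meas).2 (Filter.Eventually.of_forall hnonneg))
      hdet_cont.aestronglyMeasurable.restrict
  have heq2 : (∫⁻ x in s, ENNReal.ofReal ((hess u x).det))
      = ∫⁻ x in s, ENNReal.ofReal |(HessAux.A u x).det| := by
    apply setLIntegral_congr_fun hs_meas
    intro x hx
    beta_reduce
    rw [HessAux.det_A_eq hu x, abs_of_nonneg (hnonneg x hx)]
  have hcv := lintegral_abs_det_fderiv_eq_addHaar_image volume hs_meas
    (fun x _ => (HessAux.hgr hu x).hasFDerivWithinAt)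
    (HessAux.injOn hu hΩo hΩc hconv hsΩ (fun x hx => hx.2))
  have hK : (0:ℝ) ≤ 2 * γ / R := by positivity
  have himg : HessAux.gr u '' s ⊆ Metric.closedBall 0 (2 * γ / R) := by
    rintro _ ⟨x, hx, rfl⟩
    rw [Metric.mem_closedBall, dist_zero_right]
    exact HessAux.grad_bound hn hu hΩo hΩb hconv hbd hmin hγ hR hball₁ (hsB hx)
  have hvol : volume (HessAux.gr u '' s)
      ≤ ENNReal.ofReal ((2 * γ / R) ^ n)
        * volume (Metric.ball (0 : EuclideanSpace ℝ (Fin n)) 1) := by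
    calc volume (HessAux.gr u '' s) ≤ volume (Metric.closedBall (0:EuclideanSpace ℝ (Fin n)) (2 * γ / R)) :=
          measure_mono himg
      _ = ENNReal.ofReal ((2 * γ / R) ^ n) * volume (Metric.ball (0:EuclideanSpace ℝ (Fin n)) 1) := by
          rw [MeasureTheory.Measure.addHaar_closedBall volume 0 hK, finrank_euclideanSpace_fin]
  have hfin : ENNReal.ofReal ((2 * γ / R) ^ n)
      * volume (Metric.ball (0 : EuclideanSpace ℝ (Fin n)) 1) ≠ ⊤ :=
    ENNReal.mul_ne_top ENNReal.ofReal_ne_top measure_ball_lt_top.ne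
  have hle := ENNReal.toReal_mono hfin (le_trans (le_of_eq (heq2 ▸ hcv)) hvol)
  rw [hsplit, heq1]
  refine hle.trans ?_
  rw [ENNReal.toReal_mul, ENNReal.toReal_ofReal (by positivity)]
  rw [Real.rpow_neg hR.le, Real.rpow_natCast, div_pow, mul_pow, div_eq_mul_inv]
  apply le_of_eq
  ring

end
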